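/- Let n ≥ 2 and let T be a semistandard Young tableau of shape λ = (λ1, λ2, λ3) (a partition with at most 3 rows) with entries in {1,…,2n}, all of whose columns, read top to bottom, are among the six sequences (1), (1,2), (1,2,3), (1,2n), (1,2,2n−1), (1,2,2n). Let m1 be the number of columns equal to (1,2,2n). Then the reading word of T has dominant restriction if and only if m1 ≤ λ1 − λ2. -/

import Mathlib

/-- Component `j` (0-indexed, `j < n`) of the vector in `ℤ^n` assigned to the letter
`i ∈ {1,…,2n}`: the letter `i` is sent to the standard basis vector `e_i` if `1 ≤ i ≤ n`,
and to `−e_{2n+1−i}` if `n < i ≤ 2n`. -/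
def letterVec (n i j : ℕ) : ℤ :=
  (if i = j + 1 then 1 else 0) - (if i + j = 2 * n then 1 else 0)

/-- Component `j` (0-indexed) of the sum of the vectors assigned to the letters of `w`. -/
def resSum (n : ℕ) (w : List ℕ) (j : ℕ) : ℤ :=
  (w.map fun i => letterVec n i j).sum

/-- A word `w` over `{1,…,2n}` has *dominant restriction* if every partial sum `p` of the
assigned vectors (over prefixes of `w`) satisfies `p 0 ≥ p 1 ≥ ⋯ ≥ p (n-1) ≥ 0`. -/
def DominantRes (n : ℕ) (w : List ℕ) : Prop :=
  ∀ k : ℕ,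
    (∀ j : ℕ, j + 1 < n → resSum n (w.take k) (j + 1) ≤ resSum n (w.take k) j) ∧
    0 ≤ resSum n (w.take k) (n - 1)

/-- A word over the positive integers is a *lattice word* if every prefix contains,
for each `i ≥ 1`, at least as many letters `i` as letters `i+1`. -/
def IsLatticeWord (w : List ℕ) : Prop :=
  ∀ k i : ℕ, 1 ≤ i → (w.take k).count (i + 1) ≤ (w.take k).count i

/-- The entries of row `r` (0-indexed) of `T` lying in the skew shape `lam/nu`,
read from right to left. -/
def skewRowWord (T : ℕ → ℕ → ℕ) (nu lam : ℕ → ℕ) (r : ℕ) : List ℕ :=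
  ((List.range' (nu r) (lam r - nu r)).map (T r)).reverse

/-- The reading word (rows right to left, top row to bottom row) of a skew tableau
whose rows are `0, …, k-1`. -/
def skewReadingWord (T : ℕ → ℕ → ℕ) (nu lam : ℕ → ℕ) (k : ℕ) : List ℕ :=
  ((List.range k).map (skewRowWord T nu lam)).flatten

/-- `T` is a skew semistandard tableau of shape `lam/nu`: entries are positive,
rows weakly increase from left to right, and columns strictly increase from top to bottom.
Rows are indexed `0, 1, 2, …` from the top and columns `0, 1, 2, …` from the left;
the cells of row `r` are the `c` with `nu r ≤ c < lam r`. -/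
def IsSkewSSYT (T : ℕ → ℕ → ℕ) (nu lam : ℕ → ℕ) : Prop :=
  (∀ r c, nu r ≤ c → c < lam r → 1 ≤ T r c) ∧
  (∀ r c c', nu r ≤ c → c ≤ c' → c' < lam r → T r c ≤ T r c') ∧
  (∀ r r' c, r < r' → nu r ≤ c → c < lam r → nu r' ≤ c → c < lam r' → T r c < T r' c)

/-- `T` is a semistandard Young tableau of (straight) shape `lam` with entries
in `{1, …, N}`. -/
def IsSSYT (T : ℕ → ℕ → ℕ) (lam : ℕ → ℕ) (N : ℕ) : Prop :=
  IsSkewSSYT T (fun _ => 0) lam ∧ ∀ r c, c < lam r → T r c ≤ N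

/-- The reading word of a straight-shape tableau with rows `0, …, k-1`. -/
def readingWord (T : ℕ → ℕ → ℕ) (lam : ℕ → ℕ) (k : ℕ) : List ℕ :=
  skewReadingWord T (fun _ => 0) lam k

/-- `T` vanishes outside the skew shape `lam/nu` (a normalization used when counting
tableaux, so that a tableau is determined by its entries inside the shape). -/
def ZeroOutside (T : ℕ → ℕ → ℕ) (nu lam : ℕ → ℕ) : Prop :=
  ∀ r c, c < nu r ∨ lam r ≤ c → T r c = 0

/-- The partition with (at most) three rows `a ≥ b ≥ c`, as a row-length function. -/
def shape3 (a b c : ℕ) : ℕ → ℕ :=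
  fun r => if r = 0 then a else if r = 1 then b else if r = 2 then c else 0

/-- `T` is a Littlewood–Richardson tableau of skew shape `lam/nu` and weight `eta`
(with rows `0, …, k-1`): a skew semistandard tableau whose reading word is a lattice
word and which has exactly `eta i` entries equal to `i + 1` for every `i`. -/
def IsLRTableau (T : ℕ → ℕ → ℕ) (nu lam eta : ℕ → ℕ) (k : ℕ) : Prop :=
  IsSkewSSYT T nu lam ∧ IsLatticeWord (skewReadingWord T nu lam k) ∧
    ∀ i : ℕ, (skewReadingWord T nu lam k).count (i + 1) = eta i

/-- The `n`-symplectic Sundaram condition for a tableau of skew shape `lam/nu`, where `l`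
is the length of the longest column of the weight: for each `i ≤ l/2`, the letter `2i+1`
does not occur strictly below row `n + i` (rows counted `1, 2, …` from the top; in the
0-indexed row `r` this means `r ≥ n + i`). -/
def IsSundaram (n l : ℕ) (T : ℕ → ℕ → ℕ) (nu lam : ℕ → ℕ) : Prop :=
  ∀ i : ℕ, i ≤ l / 2 → ∀ r c, n + i ≤ r → nu r ≤ c → c < lam r → T r c ≠ 2 * i + 1

section Aux

/-! ### Generic machinery for dominance of concatenations of constant blocks -/

def Cond (n : ℕ) (w : List ℕ) : Prop :=
  (∀ j : ℕ, j + 1 < n → resSum n w (j + 1) ≤ resSum n w j) ∧ 0 ≤ resSum n w (n - 1)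

lemma dominantRes_iff (n : ℕ) (w : List ℕ) :
    DominantRes n w ↔ ∀ k, Cond n (w.take k) := Iff.rfl

lemma resSum_append (n : ℕ) (u v : List ℕ) (j : ℕ) :
    resSum n (u ++ v) j = resSum n u j + resSum n v j := by
  simp [resSum]

lemma resSum_replicate (n c i j : ℕ) :
    resSum n (List.replicate c i) j = (c : ℤ) * letterVec n i j := by
  simp [resSum, mul_comm]

lemma interp {A B m c : ℤ} (hA : 0 ≤ A) (hAc : 0 ≤ A + c * B) (h0 : 0 ≤ m) (hmc : m ≤ c) :
    0 ≤ A + m * B := by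
  rcases le_or_gt 0 B with hB | hB
  · nlinarith
  · nlinarith

lemma cond_mid (n : ℕ) (u : List ℕ) (c i m : ℕ) (hm : m ≤ c)
    (h0 : Cond n u) (h1 : Cond n (u ++ List.replicate c i)) :
    Cond n (u ++ List.replicate m i) := by
  obtain ⟨h0a, h0b⟩ := h0
  obtain ⟨h1a, h1b⟩ := h1
  have hmc : (m : ℤ) ≤ (c : ℤ) := by exact_mod_cast hm
  constructor
  · intro j hj
    have a0 := h0a j hj
    have a1 := h1a j hj
    rw [resSum_append, resSum_append, resSum_replicate, resSum_replicate] at a1 ⊢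
    have := interp (A := resSum n u j - resSum n u (j+1))
      (B := letterVec n i j - letterVec n i (j+1)) (m := (m:ℤ)) (c := (c:ℤ))
      (by linarith) (by linarith) (by positivity) hmc
    linarith
  · have a1 := h1b
    rw [resSum_append, resSum_replicate] at a1 ⊢
    have := interp (A := resSum n u (n-1)) (B := letterVec n i (n-1)) (m := (m:ℤ)) (c := (c:ℤ))
      h0b (by linarith) (by positivity) hmc
    linarith

lemma dom_nil (n : ℕ) : DominantRes n [] := by
  intro k
  constructor <;> simp [resSum]

lemma dom_append_replicate (n : ℕ) (u : List ℕ) (c i : ℕ)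
    (hu : DominantRes n u) (h : Cond n (u ++ List.replicate c i)) :
    DominantRes n (u ++ List.replicate c i) := by
  rw [dominantRes_iff]
  intro k
  rcases le_or_gt k u.length with hk | hk
  · rw [List.take_append_of_le_length hk]
    exact hu k
  · rw [List.take_append, List.take_of_length_le (le_of_lt hk),
      List.take_replicate]
    exact cond_mid n u c i _ (min_le_right _ _) (by simpa [Cond] using hu u.length) h

/-! ### Values of `letterVec` on the relevant letters -/

lemma lv1 {n j : ℕ} (hn : 2 ≤ n) (hj : j < n) : letterVec n 1 j = if j = 0 then 1 else 0 := by
  unfold letterVec; split_ifs <;> omega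

lemma lv2 {n j : ℕ} (hn : 2 ≤ n) (hj : j < n) : letterVec n 2 j = if j = 1 then 1 else 0 := by
  unfold letterVec; split_ifs <;> omega

lemma lv3 {n j : ℕ} (hn : 2 ≤ n) (hj : j < n) :
    letterVec n 3 j = if j = 2 then 1 else if n = 2 ∧ j = 1 then -1 else 0 := by
  unfold letterVec; split_ifs <;> omega

lemma lv2n {n j : ℕ} (hn : 2 ≤ n) (hj : j < n) :
    letterVec n (2 * n) j = if j = 0 then -1 else 0 := by
  unfold letterVec; split_ifs <;> omega

lemma lv2n1 {n j : ℕ} (hn : 2 ≤ n) (hj : j < n) :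
    letterVec n (2 * n - 1) j = if j = 1 then -1 else 0 := by
  unfold letterVec; split_ifs <;> omega

/-! ### The condition at the breakpoints -/

lemma condAll (n lam1 s t m b a : ℕ) (hn : 2 ≤ n) (H1 : s + t + m ≤ lam1) (H2 : a + b + m ≤ t) :
    Cond n (List.replicate lam1 1 ++ List.replicate s (2*n) ++ List.replicate t 2 ++
      List.replicate m (2*n) ++ List.replicate b (2*n-1) ++ List.replicate a 3) := by
  constructor
  · intro j hj
    have hj0 : j < n := by omega
    have hj1 : j + 1 < n := hj
    simp only [resSum_append, resSum_replicate, lv1 hn hj0, lv1 hn hj1, lv2 hn hj0,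
      lv2 hn hj1, lv3 hn hj0, lv3 hn hj1, lv2n hn hj0, lv2n hn hj1, lv2n1 hn hj0,
      lv2n1 hn hj1]
    split_ifs <;> first | omega | exact False.elim (by assumption)
  · have hj0 : n - 1 < n := by omega
    simp only [resSum_append, resSum_replicate, lv1 hn hj0, lv2 hn hj0, lv3 hn hj0,
      lv2n hn hj0, lv2n1 hn hj0]
    split_ifs <;> first | omega | exact False.elim (by assumption)

/-! ### Structure of weakly increasing rows -/

lemma upSplit (f : ℕ → ℕ) (M v : ℕ)
    (hup : ∀ c c', c ≤ c' → c' < M → f c = v → f c' = v) :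
    ∀ c, c < M →
      (f c = v ↔ M - ((Finset.range M).filter (fun c => f c = v)).card ≤ c) := by
  intro c hc
  set S := (Finset.range M).filter (fun c => f c = v) with hS
  rcases S.eq_empty_or_nonempty with he | hne
  · have h0 : S.card = 0 := by rw [he]; rfl
    rw [h0]
    constructor
    · intro hfc
      exfalso
      have : c ∈ S := by simp [hS, hc, hfc]
      simp [he] at this
    · intro h; omega
  · set m := S.min' hne with hm
    have hmS : m ∈ S := S.min'_mem hne
    have hmM : m < M := Finset.mem_range.mp (Finset.mem_filter.mp hmS).1
    have hfm : f m = v := (Finset.mem_filter.mp hmS).2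
    have hSeq : S = Finset.Ico m M := by
      ext x
      rw [hS, Finset.mem_filter, Finset.mem_range, Finset.mem_Ico]
      constructor
      · rintro ⟨hx, hfx⟩
        exact ⟨S.min'_le x (by simp [hS, hx, hfx]), hx⟩
      · rintro ⟨h1, h2⟩
        exact ⟨h2, hup m x h1 h2 hfm⟩
    have hcard : S.card = M - m := by rw [hSeq, Nat.card_Ico]
    rw [hcard]
    have hMm : M - (M - m) = m := by omega
    rw [hMm]
    constructor
    · intro hfc
      exact S.min'_le c (by simp [hS, hc, hfc])
    · intro h; exact hup m c h hc hfm

lemma map_range'_eq_replicate (f : ℕ → ℕ) (a len v : ℕ)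
    (h : ∀ c, a ≤ c → c < a + len → f c = v) :
    (List.range' a len).map f = List.replicate len v := by
  rw [List.eq_replicate_iff]
  refine ⟨by simp, ?_⟩
  intro bb hb
  obtain ⟨c, hc, rfl⟩ := List.mem_map.mp hb
  rw [List.mem_range'_1] at hc
  exact h c hc.1 hc.2

lemma range'_split (u M : ℕ) (h : u ≤ M) :
    List.range' 0 M = List.range' 0 u ++ List.range' u (M - u) := by
  have h2 := List.range'_append (s := 0) (m := u) (n := M - u) (step := 1)
  simp only [one_mul, Nat.zero_add] at h2
  rw [show u + (M - u) = M by omega] at h2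
  exact h2.symm

end Aux

/-- Let `n ≥ 2` and let `T` be a semistandard Young tableau of a 3-row
shape `λ = (λ1, λ2, λ3)` with entries in `{1,…,2n}` all of whose columns (read top to
bottom) are among `(1)`, `(1,2)`, `(1,2,3)`, `(1,2n)`, `(1,2,2n−1)`, `(1,2,2n)`, and let
`m1` be the number of columns equal to `(1,2,2n)`. Then the reading word of `T` has
dominant restriction if and only if `m1 ≤ λ1 − λ2`. -/
theorem stmt5 (n : ℕ) (hn : 2 ≤ n) (lam1 lam2 lam3 : ℕ)
    (h12 : lam2 ≤ lam1) (h23 : lam3 ≤ lam2)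
    (T : ℕ → ℕ → ℕ) (hT : IsSSYT T (shape3 lam1 lam2 lam3) (2 * n))
    (hcols : ∀ c : ℕ,
      (c < lam3 →
        T 0 c = 1 ∧ T 1 c = 2 ∧ (T 2 c = 3 ∨ T 2 c = 2 * n - 1 ∨ T 2 c = 2 * n)) ∧
      (lam3 ≤ c → c < lam2 → T 0 c = 1 ∧ (T 1 c = 2 ∨ T 1 c = 2 * n)) ∧
      (lam2 ≤ c → c < lam1 → T 0 c = 1)) :
    DominantRes n (readingWord T (shape3 lam1 lam2 lam3) 3) ↔
      ((Finset.range lam3).filter fun c => T 2 c = 2 * n).card ≤ lam1 - lam2 := by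
  obtain ⟨⟨hpos, hrow, hcol⟩, hbound⟩ := hT
  have hT0 : ∀ c, c < lam1 → T 0 c = 1 := by
    intro c hc
    rcases lt_or_ge c lam3 with h | h
    · exact ((hcols c).1 h).1
    · rcases lt_or_ge c lam2 with h' | h'
      · exact ((hcols c).2.1 h h').1
      · exact (hcols c).2.2 h' hc
  have hT12 : ∀ c, c < lam3 → T 1 c = 2 := fun c hc => ((hcols c).1 hc).2.1
  have hT1 : ∀ c, c < lam2 → T 1 c = 2 ∨ T 1 c = 2 * n := by
    intro c hc
    rcases lt_or_ge c lam3 with h | h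
    · exact Or.inl (hT12 c h)
    · exact ((hcols c).2.1 h hc).2
  have hT2 : ∀ c, c < lam3 → (T 2 c = 3 ∨ T 2 c = 2 * n - 1 ∨ T 2 c = 2 * n) :=
    fun c hc => ((hcols c).1 hc).2.2
  have hb1 : ∀ c, c < lam2 → T 1 c ≤ 2 * n := by
    intro c hc
    exact hbound 1 c (by simpa [shape3] using hc)
  have hb2 : ∀ c, c < lam3 → T 2 c ≤ 2 * n := by
    intro c hc
    exact hbound 2 c (by simpa [shape3] using hc)
  have hmono1 : ∀ c c', c ≤ c' → c' < lam2 → T 1 c ≤ T 1 c' := by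
    intro c c' h hc'
    exact hrow 1 c c' (Nat.zero_le _) h (by simpa [shape3] using hc')
  have hmono2 : ∀ c c', c ≤ c' → c' < lam3 → T 2 c ≤ T 2 c' := by
    intro c c' h hc'
    exact hrow 2 c c' (Nat.zero_le _) h (by simpa [shape3] using hc')
  have hup1 : ∀ c c', c ≤ c' → c' < lam2 → T 1 c = 2 * n → T 1 c' = 2 * n := by
    intro c c' h hc' hv
    have h1 := hmono1 c c' h hc'
    have h2 := hb1 c' hc'
    omega
  have hup2 : ∀ c c', c ≤ c' → c' < lam3 → T 2 c = 2 * n → T 2 c' = 2 * n := by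
    intro c c' h hc' hv
    have h1 := hmono2 c c' h hc'
    have h2 := hb2 c' hc'
    omega
  have ch1 := upSplit (T 1) lam2 (2 * n) hup1
  have ch2 := upSplit (T 2) lam3 (2 * n) hup2
  set s1 := ((Finset.range lam2).filter (fun c => T 1 c = 2 * n)).card with hs1def
  set m1 := ((Finset.range lam3).filter (fun c => T 2 c = 2 * n)).card with hm1def
  have hs1 : s1 ≤ lam2 := by
    rw [hs1def]; exact le_trans (Finset.card_filter_le _ _) (by simp)
  have hm1 : m1 ≤ lam3 := by
    rw [hm1def]; exact le_trans (Finset.card_filter_le _ _) (by simp)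
  have h2lt : ∀ c, c < lam3 - m1 → T 2 c ≠ 2 * n := by
    intro c hc hv
    have := (ch2 c (by omega)).mp hv
    omega
  have hup3 : ∀ c c', c ≤ c' → c' < lam3 - m1 → T 2 c = 2 * n - 1 → T 2 c' = 2 * n - 1 := by
    intro c c' h hc' hv
    have h1 := hmono2 c c' h (by omega)
    have h2 := hT2 c' (by omega)
    have h3 := h2lt c' hc'
    omega
  have ch3 := upSplit (T 2) (lam3 - m1) (2 * n - 1) hup3
  set b := ((Finset.range (lam3 - m1)).filter (fun c => T 2 c = 2 * n - 1)).card with hbdef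
  have hb : b ≤ lam3 - m1 := by
    rw [hbdef]; exact le_trans (Finset.card_filter_le _ _) (by simp)
  have h3eq : ∀ c, c < lam3 - m1 - b → T 2 c = 3 := by
    intro c hc
    have h1 := hT2 c (by omega)
    have h2 := h2lt c (by omega)
    have h3 : ¬ (lam3 - m1 - b ≤ c) := by omega
    have h4 : T 2 c ≠ 2 * n - 1 := fun hv => h3 ((ch3 c (by omega)).mp hv)
    omega
  have h2n1eq : ∀ c, lam3 - m1 - b ≤ c → c < lam3 - m1 → T 2 c = 2 * n - 1 :=
    fun c h1 h2 => (ch3 c h2).mpr h1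
  have h2neq : ∀ c, lam3 - m1 ≤ c → c < lam3 → T 2 c = 2 * n :=
    fun c h1 h2 => (ch2 c h2).mpr h1
  have h2eq1 : ∀ c, c < lam2 - s1 → T 1 c = 2 := by
    intro c hc
    have h1 := hT1 c (by omega)
    have h2 : ¬ (lam2 - s1 ≤ c) := by omega
    have h3 : T 1 c ≠ 2 * n := fun hv => h2 ((ch1 c (by omega)).mp hv)
    tauto
  have h2neq1 : ∀ c, lam2 - s1 ≤ c → c < lam2 → T 1 c = 2 * n :=
    fun c h1 h2 => (ch1 c h2).mpr h1
  have hlam3t : lam3 ≤ lam2 - s1 := by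
    by_contra hcon
    push_neg at hcon
    have h1 : T 1 (lam2 - s1) = 2 := hT12 _ hcon
    have h2 : T 1 (lam2 - s1) = 2 * n := h2neq1 _ le_rfl (by omega)
    omega
  -- the three row words
  have hw0 : skewRowWord T (fun _ => 0) (shape3 lam1 lam2 lam3) 0 = List.replicate lam1 1 := by
    have e : skewRowWord T (fun _ => 0) (shape3 lam1 lam2 lam3) 0 =
        ((List.range' 0 lam1).map (T 0)).reverse := by
      simp [skewRowWord, shape3]
    rw [e, map_range'_eq_replicate (T 0) 0 lam1 1 (fun c h1 h2 => hT0 c (by omega)),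
      List.reverse_replicate]
  have hw1 : skewRowWord T (fun _ => 0) (shape3 lam1 lam2 lam3) 1 =
      List.replicate s1 (2 * n) ++ List.replicate (lam2 - s1) 2 := by
    have e : skewRowWord T (fun _ => 0) (shape3 lam1 lam2 lam3) 1 =
        ((List.range' 0 lam2).map (T 1)).reverse := by
      simp [skewRowWord, shape3]
    rw [e, range'_split (lam2 - s1) lam2 (by omega), List.map_append,
      map_range'_eq_replicate (T 1) 0 (lam2 - s1) 2 (fun c h1 h2 => h2eq1 c (by omega)),
      map_range'_eq_replicate (T 1) (lam2 - s1) (lam2 - (lam2 - s1)) (2 * n)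
        (fun c h1 h2 => h2neq1 c h1 (by omega)),
      List.reverse_append, List.reverse_replicate, List.reverse_replicate,
      show lam2 - (lam2 - s1) = s1 by omega]
  have hw2 : skewRowWord T (fun _ => 0) (shape3 lam1 lam2 lam3) 2 =
      List.replicate m1 (2 * n) ++ List.replicate b (2 * n - 1) ++
        List.replicate (lam3 - m1 - b) 3 := by
    have e : skewRowWord T (fun _ => 0) (shape3 lam1 lam2 lam3) 2 =
        ((List.range' 0 lam3).map (T 2)).reverse := by
      simp [skewRowWord, shape3]
    rw [e, range'_split (lam3 - m1) lam3 (by omega), List.map_append,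
      range'_split (lam3 - m1 - b) (lam3 - m1) (by omega), List.map_append,
      map_range'_eq_replicate (T 2) 0 (lam3 - m1 - b) 3 (fun c h1 h2 => h3eq c (by omega)),
      map_range'_eq_replicate (T 2) (lam3 - m1 - b) (lam3 - m1 - (lam3 - m1 - b)) (2 * n - 1)
        (fun c h1 h2 => h2n1eq c h1 (by omega)),
      map_range'_eq_replicate (T 2) (lam3 - m1) (lam3 - (lam3 - m1)) (2 * n)
        (fun c h1 h2 => h2neq c h1 (by omega)),
      List.reverse_append, List.reverse_append, List.reverse_replicate,
      List.reverse_replicate, List.reverse_replicate,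
      show lam3 - m1 - (lam3 - m1 - b) = b by omega,
      show lam3 - (lam3 - m1) = m1 by omega, List.append_assoc]
  have hread : readingWord T (shape3 lam1 lam2 lam3) 3 =
      List.replicate lam1 1 ++ List.replicate s1 (2 * n) ++ List.replicate (lam2 - s1) 2 ++
        List.replicate m1 (2 * n) ++ List.replicate b (2 * n - 1) ++
        List.replicate (lam3 - m1 - b) 3 := by
    have e : readingWord T (shape3 lam1 lam2 lam3) 3 =
        skewRowWord T (fun _ => 0) (shape3 lam1 lam2 lam3) 0 ++
          (skewRowWord T (fun _ => 0) (shape3 lam1 lam2 lam3) 1 ++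
            (skewRowWord T (fun _ => 0) (shape3 lam1 lam2 lam3) 2 ++ [])) := by
      rw [readingWord, skewReadingWord, show List.range 3 = [0, 1, 2] from rfl]
      simp
    rw [e, hw0, hw1, hw2]
    simp [List.append_assoc]
  rw [hread]
  constructor
  · intro hdom
    have hW : List.replicate lam1 1 ++ List.replicate s1 (2 * n) ++
          List.replicate (lam2 - s1) 2 ++ List.replicate m1 (2 * n) ++
          List.replicate b (2 * n - 1) ++ List.replicate (lam3 - m1 - b) 3 =
        (List.replicate lam1 1 ++ (List.replicate s1 (2 * n) ++
          (List.replicate (lam2 - s1) 2 ++ List.replicate m1 (2 * n)))) ++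
        (List.replicate b (2 * n - 1) ++ List.replicate (lam3 - m1 - b) 3) := by
      simp [List.append_assoc]
    have h := (hdom ((List.replicate lam1 1 ++ (List.replicate s1 (2 * n) ++
      (List.replicate (lam2 - s1) 2 ++ List.replicate m1 (2 * n)))).length)).1 0 (by omega)
    rw [hW, List.take_left] at h
    have l0 : (0 : ℕ) < n := by omega
    have l1 : (1 : ℕ) < n := by omega
    simp only [resSum_append, resSum_replicate, lv1 hn l0, lv1 hn l1, lv2 hn l0, lv2 hn l1,
      lv2n hn l0, lv2n hn l1] at h
    norm_num at h
    omega
  · intro hm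
    have key : lam2 + m1 ≤ lam1 := by omega
    have c1 : Cond n (List.replicate lam1 1) := by
      have c := condAll n lam1 0 0 0 0 0 hn (by omega) (by omega)
      simpa using c
    have d1 : DominantRes n (List.replicate lam1 1) := by
      have h := dom_append_replicate n [] lam1 1 (dom_nil n) (by simpa using c1)
      simpa using h
    have c2 : Cond n (List.replicate lam1 1 ++ List.replicate s1 (2 * n)) := by
      have c := condAll n lam1 s1 0 0 0 0 hn (by omega) (by omega)
      simpa using c
    have d2 := dom_append_replicate n _ s1 (2 * n) d1 c2
    have c3 : Cond n (List.replicate lam1 1 ++ List.replicate s1 (2 * n) ++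
        List.replicate (lam2 - s1) 2) := by
      have c := condAll n lam1 s1 (lam2 - s1) 0 0 0 hn (by omega) (by omega)
      simpa using c
    have d3 := dom_append_replicate n _ (lam2 - s1) 2 d2 c3
    have c4 : Cond n (List.replicate lam1 1 ++ List.replicate s1 (2 * n) ++
        List.replicate (lam2 - s1) 2 ++ List.replicate m1 (2 * n)) := by
      have c := condAll n lam1 s1 (lam2 - s1) m1 0 0 hn (by omega) (by omega)
      simpa using c
    have d4 := dom_append_replicate n _ m1 (2 * n) d3 c4
    have c5 : Cond n (List.replicate lam1 1 ++ List.replicate s1 (2 * n) ++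
        List.replicate (lam2 - s1) 2 ++ List.replicate m1 (2 * n) ++
        List.replicate b (2 * n - 1)) := by
      have c := condAll n lam1 s1 (lam2 - s1) m1 b 0 hn (by omega) (by omega)
      simpa using c
    have d5 := dom_append_replicate n _ b (2 * n - 1) d4 c5
    have c6 : Cond n (List.replicate lam1 1 ++ List.replicate s1 (2 * n) ++
        List.replicate (lam2 - s1) 2 ++ List.replicate m1 (2 * n) ++
        List.replicate b (2 * n - 1) ++ List.replicate (lam3 - m1 - b) 3) :=
      condAll n lam1 s1 (lam2 - s1) m1 b (lam3 - m1 - b) hn (by omega) (by omega)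
    exact dom_append_replicate n _ (lam3 - m1 - b) 3 d5 c6
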